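/- In the Bad Match game, every Markov Max strategy σ is worthless: inf over Min strategies π of P_{d,σ,π}(Büchi({w,s})) equals 0. -/

import Mathlib

open scoped ENNReal Classical
open MeasureTheory

/-- A concurrent stochastic game: a set of states `S`, for each state a nonempty
countable set of Max actions and a nonempty finite set of Min actions, and for each
state and action pair a probability distribution on successor states. -/
structure ConcurrentGame (S A B : Type) where
  actA : S → Set A
  actB : S → Set B
  actA_nonempty : ∀ s, (actA s).Nonempty
  actA_countable : ∀ s, (actA s).Countable
  actB_nonempty : ∀ s, (actB s).Nonempty
  actB_finite : ∀ s, (actB s).Finite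
  trans : S → A → B → PMF S

namespace ConcurrentGame

/-- A history: the chronological list of (state, Max action, Min action) steps so far,
together with the current (final) state. -/
abbrev Hist (S A B : Type) : Type := List (S × A × B) × S

/-- A play: an infinite sequence of (state, Max action, Min action) triples. -/
abbrev Play (S A B : Type) : Type := ℕ → S × A × B

/-- Plays carry the product (cylinder) sigma-algebra, each (countable, discrete)
factor carrying the discrete sigma-algebra. -/
instance playMeasurableSpace (S A B : Type) : MeasurableSpace (Play S A B) :=
  @MeasurableSpace.pi ℕ (fun _ => S × A × B) (fun _ => ⊤)

/-- The cylinder sigma-algebra on infinite state sequences. -/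
def seqMS (S : Type) : MeasurableSpace (ℕ → S) :=
  @MeasurableSpace.pi ℕ (fun _ => S) (fun _ => ⊤)

variable {S A B : Type}

/-- A Max strategy: a mixed action (supported on the legal Max actions at the final
state) for every history. -/
structure MaxStrategy (G : ConcurrentGame S A B) where
  toFun : Hist S A B → PMF A
  mem_actA : ∀ h : Hist S A B, ∀ a ∈ (toFun h).support, a ∈ G.actA h.2

/-- A Min strategy: a mixed action (supported on the legal Min actions at the final
state) for every history. -/
structure MinStrategy (G : ConcurrentGame S A B) where
  toFun : Hist S A B → PMF B
  mem_actB : ∀ h : Hist S A B, ∀ b ∈ (toFun h).support, b ∈ G.actB h.2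

/-- The state at position `i` of a history with step list `l` and final state `s`. -/
def stateAt (l : List (S × A × B)) (s : S) (i : ℕ) : S :=
  match l[i]? with
  | some x => x.1
  | none => s

/-- The first state of the step list `l`, or `s` if `l` is empty. -/
def headState (l : List (S × A × B)) (s : S) : S :=
  match l with
  | [] => s
  | x :: _ => x.1

/-- Shift a function on histories by prepending a fixed first step. -/
def shiftF {α : Type} (f : Hist S A B → α) (x : S × A × B) : Hist S A B → α :=
  fun h => f (x :: h.1, h.2)

/-- The probability that the play from `s0` under the given (raw) strategies follows
exactly the history with step list `l` and final state `s`. -/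
noncomputable def histProb (G : ConcurrentGame S A B) :
    (Hist S A B → PMF A) → (Hist S A B → PMF B) → S → List (S × A × B) → S → ℝ≥0∞
  | _, _, s0, [], s => if s = s0 then 1 else 0
  | f, g, s0, (s', a, b) :: l, s =>
    if s' = s0 then
      f ([], s0) a * g ([], s0) b * G.trans s0 a b (headState l s) *
        histProb G (shiftF f (s0, a, b)) (shiftF g (s0, a, b)) (headState l s) l s
    else 0

/-- The cylinder set of plays extending the history `(l, s)`. -/
def cylinder (l : List (S × A × B)) (s : S) : Set (Play S A B) :=
  {ω | (∀ i : Fin l.length, ω i = l.get i) ∧ (ω l.length).1 = s}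

/-- `P` is the probability measure on plays induced by the initial state `s0` and the
strategies `σ` and `π` (characterized by its values on all cylinder sets; by the
Ionescu–Tulcea theorem such a measure exists and is unique on the cylinder
sigma-algebra). -/
def Consistent (G : ConcurrentGame S A B) (s0 : S) (σ : G.MaxStrategy)
    (π : G.MinStrategy) (P : Measure (Play S A B)) : Prop :=
  IsProbabilityMeasure P ∧
    ∀ (l : List (S × A × B)) (s : S), P (cylinder l s) = G.histProb σ.toFun π.toFun s0 l s

/-- The value of state `s0` for objective `E`:
`sup` over Max strategies of `inf` over Min strategies of the probability of `E`. -/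
noncomputable def val (G : ConcurrentGame S A B) (E : Set (Play S A B)) (s0 : S) : ℝ≥0∞ :=
  ⨆ σ : G.MaxStrategy, ⨅ π : G.MinStrategy,
    ⨅ P : {P : Measure (Play S A B) // Consistent G s0 σ π P}, P.1 E

/-- The Büchi objective: visit the target set `T` infinitely often. -/
def buchi {S A B : Type} (T : Set S) : Set (Play S A B) :=
  {ω | ∀ n : ℕ, ∃ m, n ≤ m ∧ (ω m).1 ∈ T}

/-- The transience objective: every state occurs only finitely often. -/
def transient {S A B : Type} : Set (Play S A B) :=
  {ω | ∀ s : S, {n : ℕ | (ω n).1 = s}.Finite}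

/-- The reachability objective: visit `T` at least once. -/
def reach {S A B : Type} (T : Set S) : Set (Play S A B) :=
  {ω | ∃ n : ℕ, (ω n).1 ∈ T}

/-- Reach the state `t` while staying inside `L` before the visit. -/
def reachVia {S A B : Type} (L : Set S) (t : S) : Set (Play S A B) :=
  {ω | ∃ n : ℕ, (ω n).1 = t ∧ ∀ i < n, (ω i).1 ∈ L}

/-- A strategy based on a memory set `M`: a map choosing a mixed action from
(mode, state), and a (possibly randomized) memory update map. -/
structure MemoryStrategy (G : ConcurrentGame S A B) (M : Type) where
  act : M → S → PMF A
  upd : S → M → A → B → S → PMF M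
  act_mem : ∀ m s, ∀ a ∈ (act m s).support, a ∈ G.actA s

variable {M : Type}

/-- The probability that the play from `s0` follows exactly the history with step
list `l` and final state `s`, when Max plays the memory-based strategy `(act, upd)`
with current (private, possibly randomized) memory mode `m` and Min plays the raw
strategy `g`. The sum ranges over the possible next memory modes. -/
noncomputable def histProbMem (G : ConcurrentGame S A B) (act : M → S → PMF A)
    (upd : S → M → A → B → S → PMF M) :
    (Hist S A B → PMF B) → M → S → List (S × A × B) → S → ℝ≥0∞
  | _, _, s0, [], s => if s = s0 then 1 else 0
  | g, m, s0, (s', a, b) :: l, s =>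
    if s' = s0 then
      act m s0 a * g ([], s0) b * G.trans s0 a b (headState l s) *
        ∑' m' : M, upd s0 m a b (headState l s) m' *
          histProbMem G act upd (shiftF g (s0, a, b)) m' (headState l s) l s
    else 0

/-- `P` is the probability measure on plays induced by the initial state `s0`, the
memory-based Max strategy `τ` with initial mode `m0`, and the Min strategy `π`
(characterized by its values on all cylinder sets). -/
def ConsistentMem (G : ConcurrentGame S A B) (s0 : S) (τ : MemoryStrategy G M)
    (m0 : M) (π : G.MinStrategy) (P : Measure (Play S A B)) : Prop :=
  IsProbabilityMeasure P ∧
    ∀ (l : List (S × A × B)) (s : S),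
      P (cylinder l s) = histProbMem G τ.act τ.upd π.toFun m0 s0 l s

/-- All memory updates are Dirac (deterministic). -/
def MemoryStrategy.DiracUpdates {G : ConcurrentGame S A B} (τ : MemoryStrategy G M) : Prop :=
  ∀ s m a b s', ∃ m', τ.upd s m a b s' = PMF.pure m'

/-- All chosen mixed actions are Dirac, i.e. the strategy is deterministic. -/
def MemoryStrategy.Deterministic {G : ConcurrentGame S A B} (τ : MemoryStrategy G M) : Prop :=
  ∀ m s, ∃ a, τ.act m s = PMF.pure a

/-- For memory of the form `ℕ × F`: the first component is a step counter,
deterministically incremented by 1 at every step. -/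
def MemoryStrategy.StepCounter {G : ConcurrentGame S A B} {F : Type}
    (τ : MemoryStrategy G (ℕ × F)) : Prop :=
  ∀ s m a b s', ∀ m' ∈ (τ.upd s m a b s').support, m'.1 = m.1 + 1

/-- A deterministic strategy: every chosen mixed action is Dirac. -/
def MaxStrategy.Deterministic {G : ConcurrentGame S A B} (σ : G.MaxStrategy) : Prop :=
  ∀ h, ∃ a, σ.toFun h = PMF.pure a

/-- A memoryless strategy: the chosen mixed action depends only on the current state. -/
def MaxStrategy.Memoryless {G : ConcurrentGame S A B} (σ : G.MaxStrategy) : Prop :=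
  ∀ h h' : Hist S A B, h.2 = h'.2 → σ.toFun h = σ.toFun h'

/-- A Markov strategy: the chosen mixed action depends only on the current state and
the number of elapsed steps. -/
def MaxStrategy.IsMarkov {G : ConcurrentGame S A B} (σ : G.MaxStrategy) : Prop :=
  ∀ h h' : Hist S A B, h.1.length = h'.1.length → h.2 = h'.2 → σ.toFun h = σ.toFun h'

/-- Turn-based: in every state, the transition distribution depends on only one
player's action. -/
def TurnBased (G : ConcurrentGame S A B) : Prop :=
  ∀ s : S,
    (∀ a ∈ G.actA s, ∀ a' ∈ G.actA s, ∀ b ∈ G.actB s, G.trans s a b = G.trans s a' b) ∨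
    (∀ a ∈ G.actA s, ∀ b ∈ G.actB s, ∀ b' ∈ G.actB s, G.trans s a b = G.trans s a b')

/-- Acyclic: no play can visit any state more than once, i.e. there is no cycle of
legal transitions. -/
def Acyclic (G : ConcurrentGame S A B) : Prop :=
  ∀ (n : ℕ) (f : ℕ → S) (a : ℕ → A) (b : ℕ → B),
    (∀ i ≤ n, a i ∈ G.actA (f i) ∧ b i ∈ G.actB (f i) ∧
      f (i + 1) ∈ (G.trans (f i) (a i) (b i)).support) →
    f (n + 1) ≠ f 0

end ConcurrentGame

namespace ConcurrentGame

/-- The states of the Bad Match game. -/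
inductive BMState : Type
  | d | w | l | s | t
deriving DecidableEq

/-- The Bad Match game: actions `{0,1}` (as `false`/`true`) for both players at `d`;
the action pairs at `d` give `(1,1) ↦ w`, `(1,0) ↦ l`, `(0,1) ↦ t`, `(0,0) ↦ s`;
`w` and `l` are sinks; `s` and `t` return to `d`. -/
noncomputable def badMatch : ConcurrentGame BMState Bool Bool where
  actA := fun _ => Set.univ
  actB := fun _ => Set.univ
  actA_nonempty := fun _ => Set.univ_nonempty
  actA_countable := fun _ => Set.countable_univ
  actB_nonempty := fun _ => Set.univ_nonempty
  actB_finite := fun _ => Set.finite_univ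
  trans := fun st a b =>
    match st, a, b with
    | .d, true, true => PMF.pure .w
    | .d, true, false => PMF.pure .l
    | .d, false, true => PMF.pure .t
    | .d, false, false => PMF.pure .s
    | .w, _, _ => PMF.pure .w
    | .l, _, _ => PMF.pure .l
    | .s, _, _ => PMF.pure .d
    | .t, _, _ => PMF.pure .d

/-- The states of the Simplified Bad Match game (the state `w` is removed). -/
inductive SBMState : Type
  | d | l | s | t
deriving DecidableEq

/-- The Simplified Bad Match game: like the Bad Match, but the action pair `(1,1)`
at `d` leads to `s` instead of the removed state `w`. -/
noncomputable def simplifiedBadMatch : ConcurrentGame SBMState Bool Bool where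
  actA := fun _ => Set.univ
  actB := fun _ => Set.univ
  actA_nonempty := fun _ => Set.univ_nonempty
  actA_countable := fun _ => Set.countable_univ
  actB_nonempty := fun _ => Set.univ_nonempty
  actB_finite := fun _ => Set.finite_univ
  trans := fun st a b =>
    match st, a, b with
    | .d, true, true => PMF.pure .s
    | .d, true, false => PMF.pure .l
    | .d, false, true => PMF.pure .t
    | .d, false, false => PMF.pure .s
    | .l, _, _ => PMF.pure .l
    | .s, _, _ => PMF.pure .d
    | .t, _, _ => PMF.pure .d

end ConcurrentGame

namespace ConcurrentGame
namespace BMAux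

open MeasureTheory

noncomputable section

/-- The deterministic transition target of the Bad Match. -/
def nxt : BMState → Bool → Bool → BMState
  | .d, true, true => .w
  | .d, true, false => .l
  | .d, false, true => .t
  | .d, false, false => .s
  | .w, _, _ => .w
  | .l, _, _ => .l
  | .s, _, _ => .d
  | .t, _, _ => .d

@[simp] lemma nxt_w (a b : Bool) : nxt .w a b = .w := rfl
@[simp] lemma nxt_l (a b : Bool) : nxt .l a b = .l := rfl
@[simp] lemma nxt_s (a b : Bool) : nxt .s a b = .d := rfl
@[simp] lemma nxt_t (a b : Bool) : nxt .t a b = .d := rfl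

lemma trans_eq (s : BMState) (a b : Bool) :
    badMatch.trans s a b = PMF.pure (nxt s a b) := by
  cases s <;> cases a <;> cases b <;> rfl

variable (p : ℕ → BMState → ℝ) (bb : ℕ → Bool)

/-- Threshold of the current interval descriptor. -/
def thr (n : ℕ) (t : BMState × ℝ × ℝ) : ℝ := t.2.1 + t.2.2 * p n t.1

/-- One step of the simulation: refine the interval and move the state. -/
def stepT (n : ℕ) (t : BMState × ℝ × ℝ) (a : Bool) : BMState × ℝ × ℝ :=
  (nxt t.1 a (bb n),
   if a then t.2.1 else thr p n t,
   if a then t.2.2 * p n t.1 else t.2.2 * (1 - p n t.1))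

/-- The simulated state/interval at time `n`, as a function of the random seed `x`. -/
def stx : ℕ → ℝ → BMState × ℝ × ℝ
  | 0, _ => (.d, 0, 1)
  | n+1, x => stepT p bb n (stx n x) (decide (x < thr p n (stx n x)))

/-- The simulated Max action at time `n`. -/
def act (n : ℕ) (x : ℝ) : Bool := decide (x < thr p n (stx p bb n x))

lemma stx_succ (n : ℕ) (x : ℝ) :
    stx p bb (n+1) x = stepT p bb n (stx p bb n x) (act p bb n x) := rfl

/-- The simulated play. -/
def Phi (x : ℝ) : Play BMState Bool Bool := fun n => ((stx p bb n x).1, act p bb n x, bb n)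

/-- Interval of a descriptor. -/
def IT (t : BMState × ℝ × ℝ) : Set ℝ := Set.Ico t.2.1 (t.2.1 + t.2.2)

/-- Interval descriptor of a history (step list plus final state). -/
def J : ℕ → BMState × ℝ × ℝ → List (BMState × Bool × Bool) → BMState → ℝ × ℝ
  | _, t, [], s => (t.2.1, if s = t.1 then t.2.2 else 0)
  | n, t, (s', a, b) :: L, s =>
      if s' = t.1 ∧ b = bb n then J (n+1) (stepT p bb n t a) L s else (t.2.1, 0)

/-- The (real-valued) probability of a history. -/
def Vr : ℕ → BMState → List (BMState × Bool × Bool) → BMState → ℝ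
  | _, s0, [], s => if s = s0 then 1 else 0
  | n, s0, (s', a, b) :: L, s =>
      if s' = s0 ∧ b = bb n then
        (if a then p n s0 else 1 - p n s0) * Vr (n+1) (nxt s0 a (bb n)) L s
      else 0

/-- Interval descriptor of a finite Max-action word (latest action first). -/
def trip : List Bool → BMState × ℝ × ℝ
  | [] => (.d, 0, 1)
  | a :: u => stepT p bb u.length (trip u) a

/-- The word of simulated Max actions up to time `n` (latest first). -/
def word : ℕ → ℝ → List Bool
  | 0, _ => []
  | n+1, x => act p bb n x :: word n x

@[simp] lemma word_length (n : ℕ) (x : ℝ) : (word p bb n x).length = n := by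
  induction n with
  | zero => rfl
  | succ n ih => simp [word, ih]

lemma stx_eq_trip (n : ℕ) (x : ℝ) : stx p bb n x = trip p bb (word p bb n x) := by
  induction n with
  | zero => rfl
  | succ n ih =>
    show stepT p bb n (stx p bb n x) _ = trip p bb (act p bb n x :: word p bb n x)
    rw [trip, word_length, ← ih]
    rfl

section Bounds

variable (hp0 : ∀ n s, 0 ≤ p n s) (hp1 : ∀ n s, p n s ≤ 1)
include hp0 hp1

lemma stepT_sub (n : ℕ) (t : BMState × ℝ × ℝ) (a : Bool) (h : 0 ≤ t.2.2) :
    t.2.1 ≤ (stepT p bb n t a).2.1 ∧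
    (stepT p bb n t a).2.1 + (stepT p bb n t a).2.2 ≤ t.2.1 + t.2.2 ∧
    0 ≤ (stepT p bb n t a).2.2 := by
  have h0 := hp0 n t.1
  have h1 := hp1 n t.1
  cases a <;> simp only [stepT, thr, if_true, if_false, Bool.false_eq_true] <;>
    refine ⟨by nlinarith, by nlinarith, by nlinarith⟩

lemma trip_sub (u : List Bool) :
    0 ≤ (trip p bb u).2.1 ∧ (trip p bb u).2.1 + (trip p bb u).2.2 ≤ 1 ∧
      0 ≤ (trip p bb u).2.2 := by
  induction u with
  | nil => norm_num [trip]
  | cons a u ih =>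
    have h := stepT_sub p bb hp0 hp1 u.length (trip p bb u) a ih.2.2
    rw [show trip p bb (a :: u) = stepT p bb u.length (trip p bb u) a from rfl]
    exact ⟨le_trans ih.1 h.1, le_trans h.2.1 ih.2.1, h.2.2⟩

lemma stx_sub (n : ℕ) (x : ℝ) :
    0 ≤ (stx p bb n x).2.1 ∧ (stx p bb n x).2.1 + (stx p bb n x).2.2 ≤ 1 ∧
      0 ≤ (stx p bb n x).2.2 := by
  rw [stx_eq_trip]; exact trip_sub p bb hp0 hp1 _

lemma mem_step {n : ℕ} {x : ℝ} (hx : x ∈ IT (stx p bb n x)) :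
    x ∈ IT (stx p bb (n+1) x) := by
  obtain ⟨hx1, hx2⟩ := hx
  have hlen : 0 ≤ (stx p bb n x).2.2 := (stx_sub p bb hp0 hp1 n x).2.2
  have h0 := hp0 n (stx p bb n x).1
  have h1 := hp1 n (stx p bb n x).1
  rw [stx_succ]
  cases hact : act p bb n x
  · have hge : ¬ (x < thr p n (stx p bb n x)) := by
      simpa [act] using hact
    rw [not_lt] at hge
    constructor
    · simpa [stepT] using hge
    · simp only [stepT, Bool.false_eq_true, if_false, thr]
      nlinarith
  · have hlt : x < thr p n (stx p bb n x) := by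
      simpa [act] using hact
    constructor
    · simpa [stepT] using hx1
    · simpa [stepT, thr] using hlt

lemma mem_stx {x : ℝ} (hx : x ∈ Set.Ico (0:ℝ) 1) (n : ℕ) : x ∈ IT (stx p bb n x) := by
  induction n with
  | zero => simpa [IT, stx] using hx
  | succ n ih => exact mem_step p bb hp0 hp1 ih

lemma J_sub (L : List (BMState × Bool × Bool)) :
    ∀ (n : ℕ) (t : BMState × ℝ × ℝ) (s : BMState), 0 ≤ t.2.2 →
    t.2.1 ≤ (J p bb n t L s).1 ∧
    (J p bb n t L s).1 + (J p bb n t L s).2 ≤ t.2.1 + t.2.2 ∧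
    0 ≤ (J p bb n t L s).2 := by
  induction L with
  | nil =>
    intro n t s h
    rw [J]
    split <;> simp <;> linarith
  | cons hd L ih =>
    obtain ⟨s', a, b⟩ := hd
    intro n t s h
    rw [J]
    split
    · have hs := stepT_sub p bb hp0 hp1 n t a h
      have := ih (n+1) (stepT p bb n t a) s hs.2.2
      exact ⟨le_trans hs.1 this.1, le_trans this.2.1 hs.2.1, this.2.2⟩
    · simp [h]

end Bounds

end

end BMAux
end ConcurrentGame
namespace ConcurrentGame
namespace BMAux

open MeasureTheory

set_option linter.constructorNameAsVariable false

noncomputable section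

variable (p : ℕ → BMState → ℝ) (bb : ℕ → Bool)

lemma forall_cons_iff (x : ℝ) (hd : BMState × Bool × Bool)
    (L : List (BMState × Bool × Bool)) (n : ℕ) :
    (∀ i : Fin (hd :: L).length, Phi p bb x (n + i) = (hd :: L).get i)
      ↔ Phi p bb x n = hd ∧ ∀ i : Fin L.length, Phi p bb x ((n+1) + i) = L.get i := by
  constructor
  · intro h
    refine ⟨by simpa using h ⟨0, by simp⟩, fun i => ?_⟩
    have := h i.succ
    simp only [List.get_cons_succ, Fin.val_succ] at this
    rw [show (n+1) + (i:ℕ) = n + ((i:ℕ)+1) by omega]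
    exact this
  · rintro ⟨h0, h⟩ i
    refine Fin.cases ?_ (fun j => ?_) i
    · simpa using h0
    · have := h j
      simp only [List.get_cons_succ, Fin.val_succ]
      rw [show n + ((j:ℕ)+1) = (n+1) + (j:ℕ) by omega]
      exact this

section Bounds

variable (hp0 : ∀ n s, 0 ≤ p n s) (hp1 : ∀ n s, p n s ≤ 1)
include hp0 hp1

lemma match_iff (L : List (BMState × Bool × Bool)) :
    ∀ (n : ℕ) (s : BMState) (x : ℝ), x ∈ IT (stx p bb n x) →
      (((∀ i : Fin L.length, Phi p bb x (n + i) = L.get i) ∧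
          (stx p bb (n + L.length) x).1 = s)
        ↔ x ∈ Set.Ico (J p bb n (stx p bb n x) L s).1
            ((J p bb n (stx p bb n x) L s).1 + (J p bb n (stx p bb n x) L s).2)) := by
  induction L with
  | nil =>
    intro n s x hx
    rw [J]
    simp only [List.length_nil, Nat.add_zero]
    constructor
    · rintro ⟨-, hs⟩
      rw [if_pos hs.symm]
      exact hx
    · intro hmem
      refine ⟨fun i => i.elim0, ?_⟩
      by_contra hs
      rw [if_neg (fun h => hs h.symm)] at hmem
      simp only [add_zero] at hmem
      exact absurd hmem (by simp)
  | cons hd L ih =>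
    obtain ⟨s', a, b⟩ := hd
    intro n s x hx
    rw [J]
    by_cases hc : s' = (stx p bb n x).1 ∧ b = bb n
    · rw [if_pos hc]
      by_cases ha : act p bb n x = a
      · have hst : stepT p bb n (stx p bb n x) a = stx p bb (n+1) x := by
          rw [stx_succ, ha]
        rw [hst]
        have hx' : x ∈ IT (stx p bb (n+1) x) := mem_step p bb hp0 hp1 hx
        rw [← ih (n+1) s x hx']
        rw [forall_cons_iff]
        constructor
        · rintro ⟨⟨-, hall⟩, hfin⟩
          refine ⟨hall, ?_⟩
          simp only [List.length_cons] at hfin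
          rw [show n + (L.length + 1) = (n+1) + L.length by omega] at hfin
          exact hfin
        · rintro ⟨hall, hfin⟩
          refine ⟨⟨?_, hall⟩, ?_⟩
          · show ((stx p bb n x).1, act p bb n x, bb n) = (s', a, b)
            rw [hc.1, ha, hc.2]
          · simp only [List.length_cons]
            rw [show n + (L.length + 1) = (n+1) + L.length by omega]
            exact hfin
      · have hlen : 0 ≤ (stx p bb n x).2.2 := (stx_sub p bb hp0 hp1 n x).2.2
        have hsub := stepT_sub p bb hp0 hp1 n (stx p bb n x) a hlen
        have hJ := J_sub p bb hp0 hp1 L (n+1) (stepT p bb n (stx p bb n x) a) s hsub.2.2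
        constructor
        · rintro ⟨hall, -⟩
          exfalso
          have h0 := (forall_cons_iff p bb x _ L n).1 hall |>.1
          have : act p bb n x = a := by
            have := congrArg (fun q => q.2.1) h0
            simpa [Phi] using this
          exact ha this
        · intro hmem
          exfalso
          -- x is in the act-subinterval, J-interval sits in the a-subinterval
          obtain ⟨hm1, hm2⟩ := hmem
          have h0 := hp0 n (stx p bb n x).1
          have h1 := hp1 n (stx p bb n x).1
          obtain ⟨hx1, hx2⟩ := hx
          cases hact : act p bb n x
          · -- act false : x ≥ thr ; a = true : J-interval ⊆ [lo, thr)
            cases a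
            · exact ha (by rw [hact])
            · have hge : ¬ (x < thr p n (stx p bb n x)) := by simpa [act] using hact
              rw [not_lt] at hge
              have : (J p bb (n+1) (stepT p bb n (stx p bb n x) true) L s).1 +
                  (J p bb (n+1) (stepT p bb n (stx p bb n x) true) L s).2 ≤
                    thr p n (stx p bb n x) := by
                refine le_trans hJ.2.1 ?_
                simp [stepT, thr]
              linarith
          · cases a
            · have hlt : x < thr p n (stx p bb n x) := by simpa [act] using hact
              have : thr p n (stx p bb n x) ≤
                  (J p bb (n+1) (stepT p bb n (stx p bb n x) false) L s).1 := by
                refine le_trans ?_ hJ.1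
                simp [stepT]
              linarith
            · exact ha (by rw [hact])
    · rw [if_neg hc]
      constructor
      · rintro ⟨hall, -⟩
        exfalso
        have h0 := (forall_cons_iff p bb x _ L n).1 hall |>.1
        have h0' : ((stx p bb n x).1, act p bb n x, bb n) = (s', a, b) := h0
        apply hc
        refine ⟨?_, ?_⟩
        · exact (congrArg (fun q => q.1) h0').symm
        · exact (congrArg (fun q => q.2.2) h0').symm
      · intro hmem
        obtain ⟨hm1, hm2⟩ := hmem
        simp only [add_zero] at hm1 hm2
        exact absurd hm2 (not_lt.2 hm1)

end Bounds

lemma J_len (L : List (BMState × Bool × Bool)) :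
    ∀ (n : ℕ) (t : BMState × ℝ × ℝ) (s : BMState),
      (J p bb n t L s).2 = t.2.2 * Vr p bb n t.1 L s := by
  induction L with
  | nil =>
    intro n t s
    rw [J, Vr]
    split <;> simp
  | cons hd L ih =>
    obtain ⟨s', a, b⟩ := hd
    intro n t s
    rw [J, Vr]
    split
    · rw [ih (n+1) (stepT p bb n t a) s]
      show (if a then t.2.2 * p n t.1 else t.2.2 * (1 - p n t.1)) *
          Vr p bb (n+1) (nxt t.1 a (bb n)) L s = _
      cases a <;> simp only [Bool.false_eq_true, if_false, if_true] <;> ring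
    · simp

lemma Vr_nonneg (hp0 : ∀ n s, 0 ≤ p n s) (hp1 : ∀ n s, p n s ≤ 1)
    (L : List (BMState × Bool × Bool)) :
    ∀ (n : ℕ) (s0 s : BMState), 0 ≤ Vr p bb n s0 L s := by
  induction L with
  | nil => intro n s0 s; rw [Vr]; split <;> norm_num
  | cons hd L ih =>
    obtain ⟨s', a, b⟩ := hd
    intro n s0 s
    rw [Vr]
    split
    · refine mul_nonneg ?_ (ih _ _ _)
      have := hp0 n s0; have := hp1 n s0
      cases a <;> simp <;> linarith
    · exact le_refl 0

lemma Vr_head (L : List (BMState × Bool × Bool)) (n : ℕ) (s0 s : BMState)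
    (h : headState L s ≠ s0) : Vr p bb n s0 L s = 0 := by
  cases L with
  | nil =>
    rw [Vr, if_neg]
    exact fun hc => h hc
  | cons hd L =>
    obtain ⟨s', a, b⟩ := hd
    rw [Vr, if_neg]
    rintro ⟨hc, -⟩
    exact h hc

end

end BMAux
end ConcurrentGame
namespace ConcurrentGame
namespace BMAux

open MeasureTheory

set_option linter.constructorNameAsVariable false

noncomputable section

variable (p : ℕ → BMState → ℝ) (bb : ℕ → Bool)

/-- Time-shifted Markov Max strategy function. -/
def Fs (F : ℕ → BMState → PMF Bool) (n : ℕ) : Hist BMState Bool Bool → PMF Bool :=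
  fun h => F (n + h.1.length) h.2

/-- Time-shifted Min strategy function. -/
def Gs (n : ℕ) : Hist BMState Bool Bool → PMF Bool :=
  fun h => PMF.pure (bb (n + h.1.length))

lemma shift_Fs (F : ℕ → BMState → PMF Bool) (n : ℕ) (z : BMState × Bool × Bool) :
    shiftF (Fs F n) z = Fs F (n+1) := by
  funext h
  show F (n + (z :: h.1).length) h.2 = F ((n+1) + h.1.length) h.2
  rw [List.length_cons, show n + (h.1.length + 1) = (n+1) + h.1.length by omega]

lemma shift_Gs (n : ℕ) (z : BMState × Bool × Bool) :
    shiftF (Gs bb n) z = Gs bb (n+1) := by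
  funext h
  show PMF.pure (bb (n + (z :: h.1).length)) = _
  rw [List.length_cons, show n + (h.1.length + 1) = (n+1) + h.1.length by omega]
  rfl

section HistEq

variable (hp0 : ∀ n s, 0 ≤ p n s) (hp1 : ∀ n s, p n s ≤ 1)
variable (F : ℕ → BMState → PMF Bool) (hF : ∀ n m, F n m true = ENNReal.ofReal (p n m))
include hp0 hp1 hF

lemma F_false (n : ℕ) (m : BMState) : F n m false = ENNReal.ofReal (1 - p n m) := by
  have h := (F n m).tsum_coe
  rw [tsum_bool] at h
  have h2 : F n m false = 1 - F n m true :=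
    ENNReal.eq_sub_of_add_eq (PMF.apply_ne_top _ _) h
  rw [h2, hF, ← ENNReal.ofReal_one, ← ENNReal.ofReal_sub _ (hp0 n m)]

lemma histProb_eq (L : List (BMState × Bool × Bool)) :
    ∀ (n : ℕ) (s0 s : BMState),
      histProb badMatch (Fs F n) (Gs bb n) s0 L s = ENNReal.ofReal (Vr p bb n s0 L s) := by
  induction L with
  | nil =>
    intro n s0 s
    rw [histProb, Vr]
    split <;> simp
  | cons hd L ih =>
    obtain ⟨s', a, b⟩ := hd
    intro n s0 s
    rw [histProb, Vr]
    by_cases hs : s' = s0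
    · rw [if_pos hs]
      rw [shift_Fs, shift_Gs, ih (n+1) (headState L s) s]
      have hGs : (Gs bb n ([], s0)) b = if b = bb n then 1 else 0 := by
        show (PMF.pure (bb (n + 0)) : PMF Bool) b = _
        rw [Nat.add_zero]
        simp [PMF.pure_apply]
      have htrans : (badMatch.trans s0 a b) (headState L s)
          = if headState L s = nxt s0 a b then 1 else 0 := by
        rw [trans_eq]
        simp [PMF.pure_apply]
      by_cases hb : b = bb n
      · rw [if_pos ⟨hs, hb⟩, hGs, if_pos hb, htrans]
        subst hb
        by_cases hh : headState L s = nxt s0 a (bb n)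
        · rw [if_pos hh, hh]
          have hFa : (Fs F n ([], s0)) a
              = ENNReal.ofReal (if a then p n s0 else 1 - p n s0) := by
            show (F (n + 0) s0) a = _
            rw [Nat.add_zero]
            cases a
            · simpa using F_false p hp0 hp1 F hF n s0
            · simpa using hF n s0
          rw [hFa, mul_one, mul_one]
          rw [← ENNReal.ofReal_mul]
          cases a
          · simp only [Bool.false_eq_true, if_false]
            linarith [hp1 n s0]
          · simp only [if_true]
            exact hp0 n s0
        · rw [if_neg hh, Vr_head p bb L (n+1) (nxt s0 a (bb n)) s hh]
          simp
      · rw [if_neg (fun hq => hb hq.2), hGs, if_neg hb]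
        simp
    · rw [if_neg hs, if_neg (fun hq => hs hq.1)]
      simp

end HistEq

/-- The Min strategy playing `bb n` at time `n`. -/
def piN : badMatch.MinStrategy where
  toFun := fun h => PMF.pure (bb h.1.length)
  mem_actB := fun h b _ => Set.mem_univ b

lemma piN_toFun : (piN bb).toFun = Gs bb 0 := by
  funext h
  show PMF.pure (bb h.1.length) = PMF.pure (bb (0 + h.1.length))
  rw [Nat.zero_add]

/-- Measurability of word- and action-fibers. -/
lemma meas_word_act (n : ℕ) :
    (∀ u : List Bool, MeasurableSet {x : ℝ | word p bb n x = u}) ∧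
      (∀ a : Bool, MeasurableSet {x : ℝ | act p bb n x = a}) := by
  have key : ∀ m : ℕ, (∀ u : List Bool, MeasurableSet {x : ℝ | word p bb m x = u}) →
      (∀ a : Bool, MeasurableSet {x : ℝ | act p bb m x = a}) := by
    intro m hw
    have htrue : MeasurableSet {x : ℝ | act p bb m x = true} := by
      have : {x : ℝ | act p bb m x = true} =
          ⋃ u : List Bool, ({x : ℝ | word p bb m x = u} ∩
            Set.Iio (thr p m (trip p bb u))) := by
        ext x
        simp only [Set.mem_setOf_eq, Set.mem_iUnion, Set.mem_inter_iff, Set.mem_Iio]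
        constructor
        · intro h
          refine ⟨word p bb m x, rfl, ?_⟩
          have h' : x < thr p m (stx p bb m x) := by simpa [act] using h
          rwa [stx_eq_trip] at h'
        · rintro ⟨u, hu, hx⟩
          show decide (x < thr p m (stx p bb m x)) = true
          rw [stx_eq_trip, hu]
          exact decide_eq_true hx
      rw [this]
      exact MeasurableSet.iUnion fun u => (hw u).inter measurableSet_Iio
    intro a
    cases a
    · have : {x : ℝ | act p bb m x = false} = {x : ℝ | act p bb m x = true}ᶜ := by
        ext x; simp
      rw [this]
      exact htrue.compl
    · exact htrue
  induction n with
  | zero =>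
    have hw : ∀ u : List Bool, MeasurableSet {x : ℝ | word p bb 0 x = u} := by
      intro u
      rcases u with _ | ⟨a, u⟩
      · exact MeasurableSet.univ.congr (by ext x; simp [word])
      · have : {x : ℝ | word p bb 0 x = a :: u} = ∅ := by ext x; simp [word]
        rw [this]; exact MeasurableSet.empty
    exact ⟨hw, key 0 hw⟩
  | succ n ih =>
    have hw : ∀ u : List Bool, MeasurableSet {x : ℝ | word p bb (n+1) x = u} := by
      intro u
      cases u with
      | nil =>
        have : {x : ℝ | word p bb (n+1) x = []} = ∅ := by ext x; simp [word]
        rw [this]; exact MeasurableSet.empty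
      | cons a u =>
        have : {x : ℝ | word p bb (n+1) x = a :: u} =
            {x : ℝ | act p bb n x = a} ∩ {x : ℝ | word p bb n x = u} := by
          ext x; simp [word]
        rw [this]
        exact (ih.2 a).inter (ih.1 u)
    exact ⟨hw, key (n+1) hw⟩

lemma meas_eval (m : ℕ) :
    @Measurable (Play BMState Bool Bool) (BMState × Bool × Bool) _ ⊤ (fun ω => ω m) :=
  @measurable_pi_apply ℕ (fun _ => BMState × Bool × Bool) (fun _ => ⊤) m

lemma meas_Phi : Measurable (Phi p bb) := by
  refine @measurable_pi_lambda ℝ ℕ (fun _ => BMState × Bool × Bool) Real.measurableSpace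
    (fun _ => ⊤) (fun x n => Phi p bb x n) (fun n => ?_)
  letI : MeasurableSpace (List Bool × Bool) := ⊤
  have h1 : Measurable (fun x : ℝ => (word p bb n x, act p bb n x)) := by
    apply measurable_to_countable
    intro y
    have : (fun x : ℝ => (word p bb n x, act p bb n x)) ⁻¹'
        {(word p bb n y, act p bb n y)} =
        {x : ℝ | word p bb n x = word p bb n y} ∩
          {x : ℝ | act p bb n x = act p bb n y} := by
      ext x; simp [Prod.ext_iff]
    rw [this]
    exact ((meas_word_act p bb n).1 _).inter ((meas_word_act p bb n).2 _)
  have h2 := @measurable_from_top (List Bool × Bool) (BMState × Bool × Bool) ⊤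
    (fun q => (((trip p bb q.1).1, q.2, bb n) : BMState × Bool × Bool))
  have heq : (fun x => Phi p bb x n) =
      (fun q : List Bool × Bool => (((trip p bb q.1).1, q.2, bb n) : BMState × Bool × Bool)) ∘
        (fun x : ℝ => (word p bb n x, act p bb n x)) := by
    funext x
    show ((stx p bb n x).1, act p bb n x, bb n) = _
    rw [stx_eq_trip]
    rfl
  rw [heq]
  exact h2.comp h1

lemma meas_cylinder (L : List (BMState × Bool × Bool)) (s : BMState) :
    MeasurableSet (cylinder L s : Set (Play BMState Bool Bool)) := by
  have : (cylinder L s : Set (Play BMState Bool Bool)) =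
      (⋂ i : Fin L.length, (fun ω : Play BMState Bool Bool => ω i) ⁻¹' {L.get i}) ∩
        ((fun ω : Play BMState Bool Bool => ω L.length) ⁻¹'
          {q : BMState × Bool × Bool | q.1 = s}) := by
    ext ω; simp [cylinder, Set.mem_iInter]
  rw [this]
  exact (MeasurableSet.iInter fun i =>
      (meas_eval _) MeasurableSpace.measurableSet_top).inter
    ((meas_eval _) MeasurableSpace.measurableSet_top)

lemma meas_buchi : MeasurableSet (buchi {BMState.w, BMState.s} : Set (Play BMState Bool Bool)) := by
  have : (buchi {BMState.w, BMState.s} : Set (Play BMState Bool Bool)) =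
      ⋂ n : ℕ, ⋃ m : ℕ, ⋃ _ : n ≤ m, (fun ω : Play BMState Bool Bool => ω m) ⁻¹'
        {q : BMState × Bool × Bool | q.1 ∈ ({BMState.w, BMState.s} : Set BMState)} := by
    ext ω; simp [buchi]
  rw [this]
  exact MeasurableSet.iInter fun n => MeasurableSet.iUnion fun m =>
    MeasurableSet.iUnion fun _ => (meas_eval _) MeasurableSpace.measurableSet_top

end

end BMAux
end ConcurrentGame
namespace ConcurrentGame
namespace BMAux

open MeasureTheory

set_option linter.constructorNameAsVariable false

noncomputable section

variable (p : ℕ → BMState → ℝ) (bb : ℕ → Bool)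

/-- The induced measure on plays. -/
def Pmeas : Measure (Play BMState Bool Bool) :=
  (volume.restrict (Set.Ico (0:ℝ) 1)).map (Phi p bb)

lemma Pmeas_apply {A : Set (Play BMState Bool Bool)} (hA : MeasurableSet A) :
    Pmeas p bb A = volume (Phi p bb ⁻¹' A ∩ Set.Ico (0:ℝ) 1) := by
  rw [Pmeas, Measure.map_apply (meas_Phi p bb) hA,
    Measure.restrict_apply (meas_Phi p bb hA)]

instance Pmeas_prob : IsProbabilityMeasure (Pmeas p bb) := by
  constructor
  rw [Pmeas_apply p bb MeasurableSet.univ]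
  simp [Real.volume_Ico]

section Consist

variable (hp0 : ∀ n s, 0 ≤ p n s) (hp1 : ∀ n s, p n s ≤ 1)
include hp0 hp1

lemma preimage_cyl (L : List (BMState × Bool × Bool)) (s : BMState) :
    Phi p bb ⁻¹' cylinder L s ∩ Set.Ico (0:ℝ) 1 =
      Set.Ico (J p bb 0 (.d, 0, 1) L s).1
        ((J p bb 0 (.d, 0, 1) L s).1 + (J p bb 0 (.d, 0, 1) L s).2) := by
  have hJs := J_sub p bb hp0 hp1 L 0 (.d, 0, 1) s (by norm_num)
  ext x
  constructor
  · rintro ⟨hc, hx⟩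
    have hx0 : x ∈ IT (stx p bb 0 x) := by
      simpa [IT, stx] using hx
    have hmem := (match_iff p bb hp0 hp1 L 0 s x hx0).mp ?_
    · exact hmem
    · obtain ⟨h1, h2⟩ := hc
      exact ⟨fun i => by simpa using h1 i, by simpa [Phi] using h2⟩
  · intro hx
    have hx01 : x ∈ Set.Ico (0:ℝ) 1 := by
      obtain ⟨h1, h2⟩ := hx
      constructor
      · exact le_trans (by simpa using hJs.1) h1
      · refine lt_of_lt_of_le h2 ?_
        simpa using hJs.2.1
    have hx0 : x ∈ IT (stx p bb 0 x) := by
      simpa [IT, stx] using hx01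
    have hmem := (match_iff p bb hp0 hp1 L 0 s x hx0).mpr hx
    refine ⟨⟨fun i => by simpa using hmem.1 i, by simpa [Phi] using hmem.2⟩, hx01⟩

lemma Pmeas_cyl (L : List (BMState × Bool × Bool)) (s : BMState) :
    Pmeas p bb (cylinder L s) = ENNReal.ofReal (Vr p bb 0 .d L s) := by
  rw [Pmeas_apply p bb (meas_cylinder L s), preimage_cyl p bb hp0 hp1 L s,
    Real.volume_Ico, add_sub_cancel_left, J_len]
  norm_num

end Consist

/-! ### Dynamics of the simulated chain -/

lemma parity (k : ℕ) (x : ℝ) :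
    (stx p bb (2*k) x).1 = .d ∨ (stx p bb (2*k) x).1 = .w ∨ (stx p bb (2*k) x).1 = .l := by
  induction k with
  | zero => left; rfl
  | succ k ih =>
    have e : 2*(k+1) = (2*k+1)+1 := by ring
    rw [e, stx_succ, stx_succ]
    simp only [stepT]
    rcases ih with h | h | h <;> rw [h] <;>
      cases act p bb (2*k) x <;> cases bb (2*k) <;>
        cases act p bb (2*k+1) x <;> cases bb (2*k+1) <;> simp [stepT, nxt]

lemma not_d_odd (k : ℕ) (x : ℝ) : (stx p bb (2*k+1) x).1 ≠ .d := by
  intro hd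
  rw [stx_succ] at hd
  have hd' : nxt (stx p bb (2*k) x).1 (act p bb (2*k) x) (bb (2*k)) = .d := hd
  rcases parity p bb k x with h | h | h <;> rw [h] at hd' <;>
    [(cases ha : act p bb (2*k) x <;> rw [ha] at hd' <;>
        cases hbv : bb (2*k) <;> rw [hbv] at hd' <;> simp [nxt] at hd');
      simp [nxt] at hd'; simp [nxt] at hd']

lemma d_even {m : ℕ} {x : ℝ} (h : (stx p bb m x).1 = .d) : ∃ k, m = 2*k := by
  rcases Nat.even_or_odd m with ⟨k, hk⟩ | ⟨k, hk⟩
  · exact ⟨k, by omega⟩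
  · exfalso
    rw [show m = 2*k+1 by omega] at h
    exact not_d_odd p bb k x h

lemma w_origin (N : ℕ) (hbb : ∀ n, bb n = true ↔ 2*N ≤ n) (m : ℕ) (x : ℝ) :
    (stx p bb m x).1 = .w →
      ∃ k, N ≤ k ∧ 2*k+1 ≤ m ∧ (stx p bb (2*k) x).1 = .d ∧ act p bb (2*k) x = true := by
  induction m with
  | zero => intro h; exact absurd h (by simp [stx])
  | succ m ih =>
    intro h
    rw [stx_succ] at h
    have h' : nxt (stx p bb m x).1 (act p bb m x) (bb m) = .w := h
    cases h5 : (stx p bb m x).1 <;> rw [h5] at h'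
    case d =>
      cases ha : act p bb m x <;> rw [ha] at h' <;>
        cases hb : bb m <;> rw [hb] at h' <;> simp [nxt] at h'
      · -- a = true, b = true
        have hm : 2*N ≤ m := (hbb m).1 hb
        obtain ⟨k, hk⟩ := d_even p bb h5
        subst hk
        exact ⟨k, by omega, by omega, h5, ha⟩
    case w =>
      obtain ⟨k, h1, h2, h3, h4⟩ := ih h5
      exact ⟨k, h1, by omega, h3, h4⟩
    all_goals simp [nxt] at h'

lemma s_time (N : ℕ) (hbb : ∀ n, bb n = true ↔ 2*N ≤ n) (m : ℕ) (x : ℝ) :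
    (stx p bb m x).1 = .s → m ≤ 2*N := by
  cases m with
  | zero => intro h; exact absurd h (by simp [stx])
  | succ m =>
    intro h
    rw [stx_succ] at h
    have h' : nxt (stx p bb m x).1 (act p bb m x) (bb m) = .s := h
    cases h5 : (stx p bb m x).1 <;> rw [h5] at h' <;>
      [skip; simp [nxt] at h'; simp [nxt] at h'; simp [nxt] at h'; simp [nxt] at h']
    cases ha : act p bb m x <;> rw [ha] at h' <;>
      cases hb : bb m <;> rw [hb] at h' <;> simp [nxt] at h'
    have : ¬ (2*N ≤ m) := by
      intro hc
      have h2 := (hbb m).2 hc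
      rw [hb] at h2
      exact Bool.false_ne_true h2
    omega

lemma l_sink (m : ℕ) (x : ℝ) (h : (stx p bb m x).1 = .l) :
    ∀ j, m ≤ j → (stx p bb j x).1 = .l := by
  intro j hj
  induction j, hj using Nat.le_induction with
  | base => exact h
  | succ j hj ih =>
    rw [stx_succ]
    show nxt (stx p bb j x).1 _ _ = _
    rw [ih]
    rfl

end

end BMAux
end ConcurrentGame
namespace ConcurrentGame
namespace BMAux

open MeasureTheory

set_option linter.constructorNameAsVariable false

noncomputable section

variable (p : ℕ → BMState → ℝ) (bb : ℕ → Bool)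

/-- The set of seeds that are at state `s0` at time `m`. -/
def Aset (m : ℕ) (s0 : BMState) : Set ℝ :=
  {x | x ∈ Set.Ico (0:ℝ) 1 ∧ (stx p bb m x).1 = s0}

section WordIff

variable (hp0 : ∀ n s, 0 ≤ p n s) (hp1 : ∀ n s, p n s ≤ 1)
include hp0 hp1

lemma word_iff (u : List Bool) :
    ∀ x ∈ Set.Ico (0:ℝ) 1,
      (word p bb u.length x = u ↔ x ∈ IT (trip p bb u)) := by
  induction u with
  | nil =>
    intro x hx
    constructor
    · intro _; simpa [IT, trip] using hx
    · intro _; rfl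
  | cons a u ih =>
    intro x hx
    have hts := trip_sub p bb hp0 hp1 u
    have hstep := stepT_sub p bb hp0 hp1 u.length (trip p bb u) a hts.2.2
    have h0 := hp0 u.length (trip p bb u).1
    have h1 := hp1 u.length (trip p bb u).1
    have hcons : word p bb (a :: u).length x = a :: u ↔
        act p bb u.length x = a ∧ word p bb u.length x = u := by
      show word p bb (u.length + 1) x = a :: u ↔ _
      rw [word]
      simp
    rw [hcons]
    by_cases hu : word p bb u.length x = u
    · have hxu : x ∈ IT (trip p bb u) := (ih x hx).1 hu
      obtain ⟨hx1, hx2⟩ := hxu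
      have hact : act p bb u.length x = decide (x < thr p u.length (trip p bb u)) := by
        rw [act, stx_eq_trip, hu]
      cases a
      · constructor
        · rintro ⟨ha, -⟩
          rw [hact] at ha
          have hge : ¬ x < thr p u.length (trip p bb u) := of_decide_eq_false ha
          rw [not_lt] at hge
          refine ⟨by simpa [trip, stepT] using hge, ?_⟩
          show x < (stepT p bb u.length (trip p bb u) false).2.1 +
            (stepT p bb u.length (trip p bb u) false).2.2
          simp only [stepT, Bool.false_eq_true, if_false, thr]
          nlinarith
        · rintro ⟨hm1, hm2⟩
          refine ⟨?_, hu⟩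
          rw [hact]
          apply decide_eq_false
          have : thr p u.length (trip p bb u) ≤ x := by
            simpa [trip, stepT] using hm1
          linarith
      · constructor
        · rintro ⟨ha, -⟩
          rw [hact] at ha
          have hlt : x < thr p u.length (trip p bb u) := of_decide_eq_true ha
          refine ⟨by simpa [trip, stepT] using hx1, ?_⟩
          show x < (stepT p bb u.length (trip p bb u) true).2.1 +
            (stepT p bb u.length (trip p bb u) true).2.2
          simpa [stepT, thr] using hlt
        · rintro ⟨hm1, hm2⟩
          refine ⟨?_, hu⟩
          rw [hact]
          apply decide_eq_true
          have : x < (stepT p bb u.length (trip p bb u) true).2.1 +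
              (stepT p bb u.length (trip p bb u) true).2.2 := hm2
          simp only [stepT, if_true, thr] at this
          simpa [thr] using this
    · constructor
      · rintro ⟨-, h⟩; exact absurd h hu
      · intro hmem
        exfalso
        apply hu
        apply (ih x hx).2
        show trip p bb u |>.2.1 ≤ x ∧ x < (trip p bb u).2.1 + (trip p bb u).2.2
        have hm1 : (stepT p bb u.length (trip p bb u) a).2.1 ≤ x := hmem.1
        have hm2 : x < (stepT p bb u.length (trip p bb u) a).2.1 +
            (stepT p bb u.length (trip p bb u) a).2.2 := hmem.2
        exact ⟨le_trans hstep.1 hm1, lt_of_lt_of_le hm2 hstep.2.1⟩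

lemma IT_trip_subset (u : List Bool) : IT (trip p bb u) ⊆ Set.Ico (0:ℝ) 1 := by
  have h := trip_sub p bb hp0 hp1 u
  intro x hx
  exact ⟨le_trans h.1 hx.1, lt_of_lt_of_le hx.2 h.2.1⟩

lemma Aset_eq (m : ℕ) (s0 : BMState) :
    Aset p bb m s0 =
      ⋃ u ∈ {u : List Bool | u.length = m ∧ (trip p bb u).1 = s0}, IT (trip p bb u) := by
  ext x
  simp only [Aset, Set.mem_setOf_eq, Set.mem_iUnion, exists_prop]
  constructor
  · rintro ⟨hx, hs⟩
    refine ⟨word p bb m x, ⟨word_length p bb m x, ?_⟩, ?_⟩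
    · rw [← stx_eq_trip]; exact hs
    · have := (word_iff p bb hp0 hp1 (word p bb m x) x hx)
      rw [word_length] at this
      exact this.1 rfl
  · rintro ⟨u, ⟨hlen, hst⟩, hmem⟩
    have hx : x ∈ Set.Ico (0:ℝ) 1 := IT_trip_subset p bb hp0 hp1 u hmem
    have hw : word p bb u.length x = u := (word_iff p bb hp0 hp1 u x hx).2 hmem
    refine ⟨hx, ?_⟩
    rw [stx_eq_trip, ← hlen, hw, hst]

lemma AsetAct_eq (m : ℕ) (s0 : BMState) (a : Bool) :
    Aset p bb m s0 ∩ {x | act p bb m x = a} =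
      ⋃ u ∈ {u : List Bool | u.length = m ∧ (trip p bb u).1 = s0},
        IT (trip p bb (a :: u)) := by
  ext x
  simp only [Aset, Set.mem_inter_iff, Set.mem_setOf_eq, Set.mem_iUnion, exists_prop]
  constructor
  · rintro ⟨⟨hx, hs⟩, ha⟩
    refine ⟨word p bb m x, ⟨word_length p bb m x, ?_⟩, ?_⟩
    · rw [← stx_eq_trip]; exact hs
    · have := word_iff p bb hp0 hp1 (a :: word p bb m x) x hx
      rw [List.length_cons, word_length] at this
      apply this.1
      rw [word, ha]
  · rintro ⟨u, ⟨hlen, hst⟩, hmem⟩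
    have hx : x ∈ Set.Ico (0:ℝ) 1 := IT_trip_subset p bb hp0 hp1 (a :: u) hmem
    have hw : word p bb (a :: u).length x = a :: u :=
      (word_iff p bb hp0 hp1 (a :: u) x hx).2 hmem
    rw [List.length_cons, hlen] at hw
    have hw' : act p bb m x = a ∧ word p bb m x = u := by
      rw [word] at hw
      · exact ⟨by simpa using congrArg List.head? hw, by simpa using congrArg List.tail hw⟩
    refine ⟨⟨hx, ?_⟩, hw'.1⟩
    rw [stx_eq_trip, hw'.2, hst]

lemma disjoint_words (m : ℕ) (S : Set (List Bool)) (hS : ∀ u ∈ S, u.length = m) :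
    S.PairwiseDisjoint (fun u => IT (trip p bb u)) := by
  intro u hu v hv huv
  refine Set.disjoint_left.2 fun x hxu hxv => huv ?_
  have hx : x ∈ Set.Ico (0:ℝ) 1 := IT_trip_subset p bb hp0 hp1 u hxu
  have h1 : word p bb u.length x = u := (word_iff p bb hp0 hp1 u x hx).2 hxu
  have h2 : word p bb v.length x = v := (word_iff p bb hp0 hp1 v x hx).2 hxv
  rw [hS u hu] at h1
  rw [hS v hv] at h2
  rw [← h1, ← h2]

omit hp0 hp1 in
lemma vol_IT (u : List Bool) : volume (IT (trip p bb u)) = ENNReal.ofReal ((trip p bb u).2.2) := by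
  rw [IT, Real.volume_Ico, add_sub_cancel_left]

lemma disjoint_words_cons (m : ℕ) (a : Bool) (S : Set (List Bool))
    (hS : ∀ u ∈ S, u.length = m) :
    S.PairwiseDisjoint (fun u => IT (trip p bb (a :: u))) := by
  intro u hu v hv huv
  refine Set.disjoint_left.2 fun x hxu hxv => huv ?_
  have hx : x ∈ Set.Ico (0:ℝ) 1 := IT_trip_subset p bb hp0 hp1 (a :: u) hxu
  have h1 : word p bb (a :: u).length x = a :: u :=
    (word_iff p bb hp0 hp1 (a :: u) x hx).2 hxu
  have h2 : word p bb (a :: v).length x = a :: v :=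
    (word_iff p bb hp0 hp1 (a :: v) x hx).2 hxv
  rw [List.length_cons, hS u hu] at h1
  rw [List.length_cons, hS v hv] at h2
  have h3 : a :: u = a :: v := h1.symm.trans h2
  exact (List.cons_eq_cons.mp h3).2

lemma vol_Aset_act (m : ℕ) (s0 : BMState) (a : Bool) :
    volume (Aset p bb m s0 ∩ {x | act p bb m x = a}) =
      ENNReal.ofReal (if a then p m s0 else 1 - p m s0) * volume (Aset p bb m s0) := by
  rw [AsetAct_eq p bb hp0 hp1, Aset_eq p bb hp0 hp1]
  have hcount : ({u : List Bool | u.length = m ∧ (trip p bb u).1 = s0}).Countable :=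
    Set.to_countable _
  rw [measure_biUnion hcount
      (disjoint_words_cons p bb hp0 hp1 m a _ (fun u hu => hu.1))
      (fun u _ => measurableSet_Ico),
    measure_biUnion hcount
      (disjoint_words p bb hp0 hp1 m _ (fun u hu => hu.1))
      (fun u _ => measurableSet_Ico),
    ← ENNReal.tsum_mul_left]
  apply tsum_congr
  rintro ⟨u, hlen, hst⟩
  rw [vol_IT, vol_IT]
  have he : (trip p bb (a :: u)).2.2 =
      (if a = true then p m s0 else 1 - p m s0) * (trip p bb u).2.2 := by
    show (stepT p bb u.length (trip p bb u) a).2.2 = _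
    rw [hlen]
    cases a <;> simp only [stepT, Bool.false_eq_true, if_false, if_true] <;>
      rw [hst] <;> ring
  have hnn : 0 ≤ (if a = true then p m s0 else 1 - p m s0) := by
    have := hp0 m s0
    have := hp1 m s0
    split <;> linarith
  rw [he, ENNReal.ofReal_mul hnn]

end WordIff

end

end BMAux
end ConcurrentGame
namespace ConcurrentGame
namespace BMAux

open MeasureTheory

set_option linter.constructorNameAsVariable false

noncomputable section

variable (p : ℕ → BMState → ℝ) (bb : ℕ → Bool)

section VolBounds

variable (hp0 : ∀ n s, 0 ≤ p n s) (hp1 : ∀ n s, p n s ≤ 1)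
include hp0 hp1

lemma meas_Aset (m : ℕ) (s0 : BMState) : MeasurableSet (Aset p bb m s0) := by
  rw [Aset_eq p bb hp0 hp1]
  exact MeasurableSet.biUnion (Set.to_countable _) (fun u _ => measurableSet_Ico)

omit hp0 hp1 in
lemma vol_Aset0 : volume (Aset p bb 0 .d) = 1 := by
  have : Aset p bb 0 .d = Set.Ico (0:ℝ) 1 := by
    ext x; simp [Aset, stx]
  rw [this, Real.volume_Ico]
  norm_num

lemma vol_Aset_le_one (m : ℕ) (s0 : BMState) : volume (Aset p bb m s0) ≤ 1 := by
  have h : Aset p bb m s0 ⊆ Set.Ico (0:ℝ) 1 := fun x hx => hx.1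
  calc volume (Aset p bb m s0) ≤ volume (Set.Ico (0:ℝ) 1) := measure_mono h
  _ = 1 := by rw [Real.volume_Ico]; norm_num

omit hp0 hp1 in
lemma Aset_step (k : ℕ) :
    Aset p bb (2*k+2) .d = Aset p bb (2*k) .d ∩ {x | act p bb (2*k) x = false} := by
  ext x
  simp only [Aset, Set.mem_setOf_eq, Set.mem_inter_iff]
  have hstep1 : stx p bb (2*k+1) x = stepT p bb (2*k) (stx p bb (2*k) x) (act p bb (2*k) x) :=
    stx_succ p bb (2*k) x
  have hstep2 : stx p bb (2*k+2) x
      = stepT p bb (2*k+1) (stx p bb (2*k+1) x) (act p bb (2*k+1) x) :=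
    stx_succ p bb (2*k+1) x
  have hval : (stx p bb (2*k+2) x).1 =
      nxt (nxt (stx p bb (2*k) x).1 (act p bb (2*k) x) (bb (2*k)))
        (act p bb (2*k+1) x) (bb (2*k+1)) := by
    rw [hstep2, hstep1]; rfl
  constructor
  · rintro ⟨hx, hd⟩
    rw [hval] at hd
    rcases parity p bb k x with h | h | h
    · refine ⟨⟨hx, h⟩, ?_⟩
      rw [h] at hd
      cases ha : act p bb (2*k) x
      · rfl
      · exfalso
        rw [ha] at hd
        cases hb1 : bb (2*k) <;> rw [hb1] at hd <;>
          cases ha2 : act p bb (2*k+1) x <;> rw [ha2] at hd <;>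
            cases hb2 : bb (2*k+1) <;> rw [hb2] at hd <;> simp [nxt] at hd
    · exfalso
      rw [h] at hd
      simp [nxt] at hd
    · exfalso
      rw [h] at hd
      simp [nxt] at hd
  · rintro ⟨⟨hx, hd⟩, ha⟩
    refine ⟨hx, ?_⟩
    rw [hval, hd, ha]
    cases bb (2*k) <;> cases act p bb (2*k+1) x <;> cases bb (2*k+1) <;> simp [nxt]

lemma vol_D : ∀ N : ℕ,
    volume (Aset p bb (2*N) .d) =
      ∏ k ∈ Finset.range N, ENNReal.ofReal (1 - p (2*k) .d) := by
  intro N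
  induction N with
  | zero =>
    rw [show 2*0 = 0 by norm_num, vol_Aset0]
    simp
  | succ N ih =>
    rw [show 2*(N+1) = 2*N+2 by ring, Aset_step, vol_Aset_act p bb hp0 hp1,
      Finset.prod_range_succ, ih]
    simp only [Bool.false_eq_true, if_false]
    ring

end VolBounds

section Buchi

variable (hp0 : ∀ n s, 0 ≤ p n s) (hp1 : ∀ n s, p n s ≤ 1)
variable (N : ℕ) (hbb : ∀ n, bb n = true ↔ 2*N ≤ n)
include hbb

lemma buchi_sub_D :
    Phi p bb ⁻¹' buchi {BMState.w, BMState.s} ∩ Set.Ico (0:ℝ) 1 ⊆ Aset p bb (2*N) .d := by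
  rintro x ⟨hb, hx⟩
  refine ⟨hx, ?_⟩
  rcases parity p bb N x with h | h | h
  · exact h
  · obtain ⟨k, h1, h2, -, -⟩ := w_origin p bb N hbb (2*N) x h
    omega
  · exfalso
    obtain ⟨m, hm, hmem⟩ := hb (2*N)
    have hl : (stx p bb m x).1 = .l := l_sink p bb (2*N) x h m hm
    have : (Phi p bb x m).1 = BMState.l := hl
    rw [this] at hmem
    simp at hmem

lemma buchi_sub_E :
    Phi p bb ⁻¹' buchi {BMState.w, BMState.s} ∩ Set.Ico (0:ℝ) 1 ⊆
      ⋃ k : ℕ, (Aset p bb (2*(N+k)) .d ∩ {x | act p bb (2*(N+k)) x = true}) := by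
  rintro x ⟨hb, hx⟩
  have hw : ∃ m, (stx p bb m x).1 = .w := by
    by_contra hnw
    push_neg at hnw
    obtain ⟨m, hm, hmem⟩ := hb (2*N+1)
    have hmem' : (stx p bb m x).1 = BMState.w ∨ (stx p bb m x).1 = BMState.s := by
      simpa [Phi] using hmem
    rcases hmem' with h | h
    · exact hnw m h
    · have := s_time p bb N hbb m x h
      omega
  obtain ⟨m, hm⟩ := hw
  obtain ⟨k, h1, h2, h3, h4⟩ := w_origin p bb N hbb m x hm
  refine Set.mem_iUnion.2 ⟨k - N, ?_⟩
  have e : 2*(N + (k - N)) = 2*k := by omega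
  rw [e]
  exact ⟨⟨hx, h3⟩, h4⟩

include hp0 hp1

lemma Pmeas_buchi_le_D :
    Pmeas p bb (buchi {BMState.w, BMState.s}) ≤
      ∏ k ∈ Finset.range N, ENNReal.ofReal (1 - p (2*k) .d) := by
  rw [Pmeas_apply p bb (meas_buchi)]
  calc volume (Phi p bb ⁻¹' buchi {BMState.w, BMState.s} ∩ Set.Ico (0:ℝ) 1)
      ≤ volume (Aset p bb (2*N) .d) := measure_mono (buchi_sub_D p bb N hbb)
    _ = _ := vol_D p bb hp0 hp1 N

lemma Pmeas_buchi_le_E :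
    Pmeas p bb (buchi {BMState.w, BMState.s}) ≤
      ∑' k : ℕ, ENNReal.ofReal (p (2*(N+k)) .d) := by
  rw [Pmeas_apply p bb (meas_buchi)]
  calc volume (Phi p bb ⁻¹' buchi {BMState.w, BMState.s} ∩ Set.Ico (0:ℝ) 1)
      ≤ volume (⋃ k : ℕ, (Aset p bb (2*(N+k)) .d ∩ {x | act p bb (2*(N+k)) x = true})) :=
        measure_mono (buchi_sub_E p bb N hbb)
    _ ≤ ∑' k : ℕ, volume (Aset p bb (2*(N+k)) .d ∩ {x | act p bb (2*(N+k)) x = true}) :=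
        measure_iUnion_le _
    _ ≤ ∑' k : ℕ, ENNReal.ofReal (p (2*(N+k)) .d) := by
        refine ENNReal.tsum_le_tsum fun k => ?_
        rw [vol_Aset_act p bb hp0 hp1]
        simp only [if_true]
        calc ENNReal.ofReal (p (2*(N+k)) BMState.d) * volume (Aset p bb (2*(N+k)) BMState.d)
            ≤ ENNReal.ofReal (p (2*(N+k)) BMState.d) * 1 := by
              exact mul_le_mul_right (vol_Aset_le_one p bb hp0 hp1 _ _) _
          _ = _ := mul_one _

end Buchi

end

end BMAux
end ConcurrentGame

namespace ConcurrentGame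

open Filter

set_option linter.constructorNameAsVariable false

/-- **The Bad Match: Markov strategies are worthless.**
For every Markov Max strategy (the chosen mixed action depends only on the current
state and the number of elapsed steps), the infimum over Min strategies of the
probability of the Büchi objective `buchi {w, s}` from `d` is `0`. -/
theorem badMatch_markov_worthless (σ : badMatch.MaxStrategy) (hσ : σ.IsMarkov) :
    (⨅ π : badMatch.MinStrategy,
      ⨅ P : {P : Measure (Play BMState Bool Bool) //
          Consistent badMatch BMState.d σ π P},
        P.1 (buchi {BMState.w, BMState.s})) = 0 := by

  classical
  set F : ℕ → BMState → PMF Bool :=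
    fun n s => σ.toFun (List.replicate n (BMState.d, true, true), s) with hFdef
  set p : ℕ → BMState → ℝ := fun n s => ((F n s) true).toReal with hpdef
  have hp0 : ∀ n s, 0 ≤ p n s := fun n s => ENNReal.toReal_nonneg
  have hp1 : ∀ n s, p n s ≤ 1 := by
    intro n s
    have h := PMF.coe_le_one (F n s) true
    have h2 := ENNReal.toReal_mono (by norm_num) h
    simpa using h2
  have hF : ∀ n m, (F n m) true = ENNReal.ofReal (p n m) := fun n m =>
    (ENNReal.ofReal_toReal (PMF.apply_ne_top _ _)).symm
  have hσf : σ.toFun = BMAux.Fs F 0 := by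
    funext h
    have h1 := hσ h (List.replicate h.1.length (BMState.d, true, true), h.2)
      (by simp) rfl
    show σ.toFun h = F (0 + h.1.length) h.2
    rw [Nat.zero_add]
    exact h1
  have key : ∀ N : ℕ,
      (⨅ π : badMatch.MinStrategy,
        ⨅ P : {P : Measure (Play BMState Bool Bool) //
            Consistent badMatch BMState.d σ π P},
          P.1 (buchi {BMState.w, BMState.s})) ≤
        min (∏ k ∈ Finset.range N, ENNReal.ofReal (1 - p (2*k) BMState.d))
          (∑' k : ℕ, ENNReal.ofReal (p (2*(N+k)) BMState.d)) := by
    intro N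
    set bb : ℕ → Bool := fun n => decide (2*N ≤ n) with hbbdef
    have hbb : ∀ n, bb n = true ↔ 2*N ≤ n := fun n => by simp [hbbdef]
    have hcons : Consistent badMatch BMState.d σ (BMAux.piN bb) (BMAux.Pmeas p bb) := by
      refine ⟨BMAux.Pmeas_prob p bb, fun L s => ?_⟩
      rw [BMAux.Pmeas_cyl p bb hp0 hp1 L s, hσf, BMAux.piN_toFun,
        BMAux.histProb_eq p bb hp0 hp1 F hF L 0 BMState.d s]
    refine le_trans (iInf_le_of_le (BMAux.piN bb)
      (iInf_le_of_le ⟨BMAux.Pmeas p bb, hcons⟩ (le_refl _))) ?_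
    exact le_min (BMAux.Pmeas_buchi_le_D p bb hp0 hp1 N hbb)
      (BMAux.Pmeas_buchi_le_E p bb hp0 hp1 N hbb)
  refine le_antisymm ?_ (zero_le)
  refine ENNReal.le_of_forall_pos_le_add (fun ε hε _ => ?_)
  rw [zero_add]
  by_cases hsum : (∑' k : ℕ, ENNReal.ofReal (p (2*k) BMState.d)) = ⊤
  · -- partial sums diverge: the product bound goes to 0
    have hns : ¬ Summable (fun k => p (2*k) BMState.d) := by
      intro hs
      have h1 := ENNReal.ofReal_tsum_of_nonneg (fun k => hp0 _ _) hs
      exact ENNReal.ofReal_ne_top (h1.trans hsum)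
    have hdiv : Tendsto (fun n => ∑ i ∈ Finset.range n, p (2*i) BMState.d)
        atTop atTop := by
      by_contra hcon
      exact hns ((summable_iff_not_tendsto_nat_atTop_of_nonneg
        (fun k => hp0 _ _)).2 hcon)
    have hexp : Tendsto
        (fun n => Real.exp (-∑ i ∈ Finset.range n, p (2*i) BMState.d))
        atTop (nhds 0) :=
      Real.tendsto_exp_neg_atTop_nhds_zero.comp hdiv
    have hεr : (0:ℝ) < (ε:ℝ) := by exact_mod_cast hε
    obtain ⟨N, hN⟩ := (hexp.eventually_lt_const hεr).exists
    refine le_trans (key N) (le_trans (min_le_left _ _) ?_)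
    have hprod : ∏ k ∈ Finset.range N, (1 - p (2*k) BMState.d) ≤
        Real.exp (-∑ i ∈ Finset.range N, p (2*i) BMState.d) := by
      have h1 : ∏ k ∈ Finset.range N, (1 - p (2*k) BMState.d) ≤
          ∏ k ∈ Finset.range N, Real.exp (-(p (2*k) BMState.d)) := by
        refine Finset.prod_le_prod (fun i _ => by linarith [hp1 (2*i) BMState.d])
          (fun i _ => by
            have := Real.add_one_le_exp (-(p (2*i) BMState.d))
            linarith)
      have h2 : ∏ k ∈ Finset.range N, Real.exp (-(p (2*k) BMState.d)) =
          Real.exp (-∑ i ∈ Finset.range N, p (2*i) BMState.d) := by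
        rw [← Real.exp_sum]
        congr 1
        rw [← Finset.sum_neg_distrib]
      rw [← h2]
      exact h1
    calc ∏ k ∈ Finset.range N, ENNReal.ofReal (1 - p (2*k) BMState.d)
        = ENNReal.ofReal (∏ k ∈ Finset.range N, (1 - p (2*k) BMState.d)) :=
          (ENNReal.ofReal_prod_of_nonneg
            (fun i _ => by linarith [hp1 (2*i) BMState.d])).symm
      _ ≤ ENNReal.ofReal ((ε:ℝ)) :=
          ENNReal.ofReal_le_ofReal (le_trans hprod hN.le)
      _ = (ε : ℝ≥0∞) := ENNReal.ofReal_coe_nnreal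
  · have htail := ENNReal.tendsto_sum_nat_add
      (fun k => ENNReal.ofReal (p (2*k) BMState.d)) hsum
    have hεpos : (0 : ℝ≥0∞) < (ε : ℝ≥0∞) := by exact_mod_cast hε
    obtain ⟨N, hN⟩ := (htail.eventually_lt_const hεpos).exists
    refine le_trans (key N) (le_trans (min_le_right _ _) ?_)
    have he : (∑' k : ℕ, ENNReal.ofReal (p (2*(N+k)) BMState.d)) =
        ∑' k : ℕ, ENNReal.ofReal (p (2*(k+N)) BMState.d) := by
      apply tsum_congr
      intro k
      rw [show N + k = k + N by omega]
    rw [he]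
    exact hN.le


end ConcurrentGame
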